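/- Let p be a prime, G a group, P a finite subgroup of G, Q a subgroup of G which is a p-group (every element of Q has p-power order), and H a subgroup of G. Assume that the commutator subgroup ⁅P, H⁆ is contained in Q and that H centralizes Q (H ≤ C_G(Q)). Then for every h ∈ H there exists k ∈ ℕ such that h^(p^k) centralizes P, i.e., h^(p^k) ∈ C_G(P). -/

import Mathlib

open scoped commutatorElement

/-- Two-step stability: if `⁅P, H⁆ ≤ Q` for a `p`-group `Q` centralized by `H`,
and `P` is finite, then for every `h ∈ H` some `p`-power of `h`
centralizes `P`. -/
theorem stmt_1 {p : ℕ} (hp : p.Prime) {G : Type*} [Group G]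
    (P Q H : Subgroup G) [Finite P] (hQ : IsPGroup p Q)
    (hPH : ⁅P, H⁆ ≤ Q) (hHQ : H ≤ Subgroup.centralizer (Q : Set G)) :
    ∀ h ∈ H, ∃ k : ℕ, h ^ (p ^ k) ∈ Subgroup.centralizer (P : Set G) := by
  intro h hh
  classical
  have := Fintype.ofFinite P
  -- for each x ∈ P, the commutator c x = ⁅h, x⁆ lies in Q
  have hc : ∀ x : P, ⁅h, (x : G)⁆ ∈ Q := by
    intro x
    have : ⁅(x : G), h⁆ ∈ Q := hPH (Subgroup.commutator_mem_commutator x.2 hh)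
    simpa [commutatorElement_inv] using Q.inv_mem this
  -- exponent for each x
  have hm : ∀ x : P, ∃ m : ℕ, ⁅h, (x : G)⁆ ^ (p ^ m) = 1 := by
    intro x
    obtain ⟨m, hm⟩ := hQ ⟨_, hc x⟩
    exact ⟨m, by simpa [Subtype.ext_iff] using hm⟩
  choose m hmspec using hm
  refine ⟨Finset.univ.sup m, ?_⟩
  rw [Subgroup.mem_centralizer_iff]
  rintro x hx
  set xx : P := ⟨x, hx⟩
  set c : G := ⁅h, x⁆ with hcdef
  -- h commutes with c
  have hhc : c * h = h * c := by
    have := hHQ hh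
    rw [Subgroup.mem_centralizer_iff] at this
    exact this c (hc xx)
  -- key induction: h^n * x * (h^n)⁻¹ = c^n * x
  have key : ∀ n : ℕ, h ^ n * x * (h ^ n)⁻¹ = c ^ n * x := by
    intro n
    induction n with
    | zero => simp
    | succ n ih =>
      have hcomm : h * c ^ n = c ^ n * h :=
        ((Commute.symm hhc).pow_right n)
      calc h ^ (n+1) * x * (h ^ (n+1))⁻¹
          = h * (h ^ n * x * (h ^ n)⁻¹) * h⁻¹ := by rw [pow_succ']; group
        _ = h * (c ^ n * x) * h⁻¹ := by rw [ih]
        _ = c ^ n * (h * x * h⁻¹) := by rw [← mul_assoc, hcomm]; group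
        _ = c ^ n * (c * x) := by
            congr 1
            simp only [hcdef, commutatorElement_def]
            group
        _ = c ^ (n+1) * x := by rw [pow_succ]; group
  -- c ^ (p ^ sup) = 1
  have hdvd : p ^ m xx ∣ p ^ (Finset.univ.sup m) :=
    pow_dvd_pow p (Finset.le_sup (Finset.mem_univ xx))
  have hc1 : c ^ (p ^ Finset.univ.sup m) = 1 := by
    obtain ⟨d, hd⟩ := hdvd
    rw [hd, pow_mul, hmspec xx, one_pow]
  have := key (p ^ Finset.univ.sup m)
  rw [hc1, one_mul] at this
  -- conclude x * h^N = h^N * x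
  have := mul_inv_eq_iff_eq_mul.mp this
  rw [this]
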